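/- Let n ≥ 2 be a natural number and define C₃ : (0,1/2) → ℝ by C₃(w) = (10w+3)/(30·w·(1−2w)) + 1/(6w) + (n−1)·(1 + 1/(6w)). Then w* = (5n + 3 − 2√(10n+6))/(10(n−1)) lies in (0,1/2) and is the unique minimizer of C₃ on (0,1/2); in particular, Case 3 yields the same minimax-optimal weight as Case 2. -/

import Mathlib

/-- Quadratic regression, Case 3: unique minimizer of
C₃(w) = (10w+3)/(30w(1-2w)) + 1/(6w) + (n-1)(1 + 1/(6w)) on (0,1/2) is the same
weight (5n+3-2√(10n+6))/(10(n-1)) as in Case 2. -/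
theorem stmt_9 (n : ℕ) (hn : 2 ≤ n) :
    (5*(n:ℝ) + 3 - 2 * Real.sqrt (10*(n:ℝ) + 6)) / (10 * ((n:ℝ) - 1)) ∈
        Set.Ioo (0:ℝ) (1/2) ∧
    ∀ w ∈ Set.Ioo (0:ℝ) (1/2),
      w ≠ (5*(n:ℝ) + 3 - 2 * Real.sqrt (10*(n:ℝ) + 6)) / (10 * ((n:ℝ) - 1)) →
      (fun w : ℝ => (10*w + 3) / (30 * w * (1 - 2*w)) + 1 / (6*w) +
            ((n:ℝ) - 1) * (1 + 1 / (6*w)))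
          ((5*(n:ℝ) + 3 - 2 * Real.sqrt (10*(n:ℝ) + 6)) / (10 * ((n:ℝ) - 1))) <
        (fun w : ℝ => (10*w + 3) / (30 * w * (1 - 2*w)) + 1 / (6*w) +
            ((n:ℝ) - 1) * (1 + 1 / (6*w))) w := by
  have hm : (2:ℝ) ≤ (n:ℝ) := by exact_mod_cast hn
  set m : ℝ := (n:ℝ) with hmdef
  have hm1 : (0:ℝ) < m - 1 := by linarith
  have hr0 : 0 ≤ Real.sqrt (10*m+6) := Real.sqrt_nonneg _
  set r := Real.sqrt (10*m+6) with hrdef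
  have hr2 : r^2 = 10*m+6 := Real.sq_sqrt (by linarith)
  have hr4 : 4 < r := by nlinarith [hr2, hr0]
  have hrA : 2*r < 5*m+3 := by nlinarith [hr2, hr0, sq_nonneg (2*r - 5*m - 3)]
  set s := (5*m + 3 - 2*r)/(10*(m-1)) with hsdef
  have hden : (10*(m-1)) ≠ 0 := by positivity
  have hbs : 10*(m-1)*s = 5*m+3 - 2*r := by
    rw [hsdef]; field_simp
  have hs0 : 0 < s := div_pos (by linarith) (by linarith)
  have hs12 : s < 1/2 := by
    rw [hsdef, div_lt_iff₀ (by linarith)]; linarith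
  have hNs : 5*m+3 - 10*(m-1)*s = 2*r := by linarith
  have hA2 : 5*m+3 - 2*(5*m+3)*s - 4*r*s = 0 := by
    have h' : 10*(m-1)*(5*m+3 - 2*(5*m+3)*s - 4*r*s) = 0 := by
      linear_combination (-(2*(5*m+3)+4*r))*hbs + 8*hr2
    exact (mul_eq_zero.mp h').resolve_left hden
  refine ⟨⟨hs0, hs12⟩, ?_⟩
  intro w hw hne
  simp only
  have hw0 : 0 < w := hw.1
  have hw2 : 0 < 1 - 2*w := by have := hw.2; linarith
  have hs2 : 0 < 1 - 2*s := by linarith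
  have hD : ∀ x:ℝ, 0 < x → 0 < 1-2*x →
      (10*x + 3) / (30 * x * (1 - 2*x)) + 1 / (6*x) + (m - 1) * (1 + 1 / (6*x)) =
      (m-1) + (5*m+3 - 10*(m-1)*x)/(30*(x*(1-2*x))) := by
    intro x hx hx2
    have h1 : x ≠ 0 := ne_of_gt hx
    have h2 : (1-2*x) ≠ 0 := ne_of_gt hx2
    field_simp
    have h3 : (1 - 2*x)⁻¹ * (1 - 2*x) = 1 := inv_mul_cancel₀ h2
    linear_combination (-30*m) * h3
  rw [hD s hs0 hs2, hD w hw0 hw2]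
  have hsw : s - w ≠ 0 := sub_ne_zero.mpr (Ne.symm hne)
  have hsq : 0 < (s - w)^2 := by positivity
  have hkey : (5*m+3 - 10*(m-1)*s)/(30*(s*(1-2*s))) <
      (5*m+3 - 10*(m-1)*w)/(30*(w*(1-2*w))) := by
    rw [div_lt_div_iff₀ (by positivity) (by positivity)]
    have hid : (5*m+3 - 10*(m-1)*w)*(30*(s*(1-2*s))) -
        (5*m+3 - 10*(m-1)*s)*(30*(w*(1-2*w))) = 120*r*(s-w)^2 := by
      linear_combination (30*(s-w))*hA2 - (60*w*(s-w))*hNs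
    nlinarith [hid, mul_pos (show (0:ℝ) < r by linarith) hsq]
  linarith
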